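/- In the two-type mean-field model with cooperation (a_{1,1} < a_{2,1} and a_{2,2} < a_{1,2}), the interior equilibrium u* is asymptotically stable for du/dt = h(u): h(u) > 0 for u in (0, u*) and h(u) < 0 for u in (u*, 1); consequently every solution with initial condition in (0,1) converges to u* as t -> infinity. -/

import Mathlib

noncomputable def twoTypeH (a11 a12 a21 a22 : ℝ) (u : ℝ) : ℝ :=
  (a12 / (a12 * u + a22 * (1 - u)) - a21 / (a11 * u + a21 * (1 - u))) * u * (1 - u)

section Aux
variable {a11 a12 a21 a22 : ℝ}

/-- abbreviation for the interior equilibrium -/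
noncomputable def ustar (a11 a12 a21 a22 : ℝ) : ℝ :=
  a21 * (a12 - a22) / (a12 * (a21 - a11) + a21 * (a12 - a22))

lemma hDpos (h12 : 0 < a12) (h21 : 0 < a21) (hcoop1 : a11 < a21) (hcoop2 : a22 < a12) :
    0 < a12 * (a21 - a11) + a21 * (a12 - a22) := by nlinarith [mul_pos h12 (sub_pos.2 hcoop1), mul_pos h21 (sub_pos.2 hcoop2)]

lemma ustar_mem (h12 : 0 < a12) (h21 : 0 < a21) (hcoop1 : a11 < a21) (hcoop2 : a22 < a12) :
    ustar a11 a12 a21 a22 ∈ Set.Ioo (0:ℝ) 1 := by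
  have hD := hDpos h12 h21 hcoop1 hcoop2
  constructor
  · apply div_pos (mul_pos h21 (sub_pos.2 hcoop2)) hD
  · rw [ustar, div_lt_one hD]; nlinarith

lemma Apos (h11 : 0 < a11) (h21 : 0 < a21) {u : ℝ} (hu : u ∈ Set.Icc (0:ℝ) 1) :
    0 < a11 * u + a21 * (1 - u) := by
  rcases hu with ⟨h0, h1⟩
  rcases eq_or_lt_of_le h0 with h | h
  · simp [← h]; linarith
  · have : 0 ≤ a21 * (1 - u) := by nlinarith
    nlinarith

lemma Bpos (h12 : 0 < a12) (h22 : 0 < a22) {u : ℝ} (hu : u ∈ Set.Icc (0:ℝ) 1) :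
    0 < a12 * u + a22 * (1 - u) := by
  rcases hu with ⟨h0, h1⟩
  rcases eq_or_lt_of_le h0 with h | h
  · simp [← h]; linarith
  · have : 0 ≤ a22 * (1 - u) := by nlinarith
    nlinarith

lemma h_eq (h11 : 0 < a11) (h12 : 0 < a12) (h21 : 0 < a21) (h22 : 0 < a22)
    (hcoop1 : a11 < a21) (hcoop2 : a22 < a12)
    {u : ℝ} (hu : u ∈ Set.Icc (0:ℝ) 1) :
    twoTypeH a11 a12 a21 a22 u =
      (a12 * (a21 - a11) + a21 * (a12 - a22)) * (ustar a11 a12 a21 a22 - u) * (u * (1 - u)) /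
        ((a12 * u + a22 * (1 - u)) * (a11 * u + a21 * (1 - u))) := by
  have hA := (Apos h11 h21 hu).ne'
  have hB := (Bpos h12 h22 hu).ne'
  have hD := (hDpos h12 h21 hcoop1 hcoop2).ne'
  rw [twoTypeH, ustar]
  rw [mul_sub (a12 * (a21 - a11) + a21 * (a12 - a22)), mul_div_cancel₀ _ hD, div_sub_div _ _ hB hA]
  ring

end Aux

section Aux2
variable {a11 a12 a21 a22 : ℝ}

lemma h_sign_pos (h11 : 0 < a11) (h12 : 0 < a12) (h21 : 0 < a21) (h22 : 0 < a22)
    (hcoop1 : a11 < a21) (hcoop2 : a22 < a12)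
    {u : ℝ} (hu : u ∈ Set.Ioo (0:ℝ) (ustar a11 a12 a21 a22)) :
    0 < twoTypeH a11 a12 a21 a22 u := by
  have hus := ustar_mem h12 h21 hcoop1 hcoop2
  have hu1 : u ∈ Set.Icc (0:ℝ) 1 := ⟨hu.1.le, le_of_lt (hu.2.trans hus.2)⟩
  rw [h_eq h11 h12 h21 h22 hcoop1 hcoop2 hu1]
  have hD := hDpos h12 h21 hcoop1 hcoop2
  apply div_pos
  · have h1 : 0 < ustar a11 a12 a21 a22 - u := sub_pos.2 hu.2
    have h2 : 0 < u * (1 - u) := mul_pos hu.1 (by linarith [hu.2.trans hus.2])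
    positivity
  · exact mul_pos (Bpos h12 h22 hu1) (Apos h11 h21 hu1)

lemma h_sign_neg (h11 : 0 < a11) (h12 : 0 < a12) (h21 : 0 < a21) (h22 : 0 < a22)
    (hcoop1 : a11 < a21) (hcoop2 : a22 < a12)
    {u : ℝ} (hu : u ∈ Set.Ioo (ustar a11 a12 a21 a22) (1:ℝ)) :
    twoTypeH a11 a12 a21 a22 u < 0 := by
  have hus := ustar_mem h12 h21 hcoop1 hcoop2
  have hu1 : u ∈ Set.Icc (0:ℝ) 1 := ⟨le_of_lt (hus.1.trans hu.1), hu.2.le⟩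
  rw [h_eq h11 h12 h21 h22 hcoop1 hcoop2 hu1]
  have hD := hDpos h12 h21 hcoop1 hcoop2
  apply div_neg_of_neg_of_pos
  · have h1 : ustar a11 a12 a21 a22 - u < 0 := sub_neg.2 hu.1
    have h2 : 0 < u * (1 - u) := mul_pos (hus.1.trans hu.1) (by linarith [hu.2])
    exact mul_neg_of_neg_of_pos (mul_neg_of_pos_of_neg hD h1) h2
  · exact mul_pos (Bpos h12 h22 hu1) (Apos h11 h21 hu1)

lemma h_zero : twoTypeH a11 a12 a21 a22 0 = 0 := by simp [twoTypeH]

lemma h_one : twoTypeH a11 a12 a21 a22 1 = 0 := by simp [twoTypeH]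

lemma h_ustar (h11 : 0 < a11) (h12 : 0 < a12) (h21 : 0 < a21) (h22 : 0 < a22)
    (hcoop1 : a11 < a21) (hcoop2 : a22 < a12) :
    twoTypeH a11 a12 a21 a22 (ustar a11 a12 a21 a22) = 0 := by
  have hus := ustar_mem h12 h21 hcoop1 hcoop2
  rw [h_eq h11 h12 h21 h22 hcoop1 hcoop2 ⟨hus.1.le, hus.2.le⟩]
  simp

lemma lipschitz_h (h11 : 0 < a11) (h12 : 0 < a12) (h21 : 0 < a21) (h22 : 0 < a22) :
    ∃ K : NNReal, LipschitzOnWith K (twoTypeH a11 a12 a21 a22) (Set.Icc 0 1) := by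
  set U : Set ℝ := {u | 0 < a12 * u + a22 * (1 - u)} ∩ {u | 0 < a11 * u + a21 * (1 - u)} with hU
  have hUopen : IsOpen U :=
    (isOpen_lt continuous_const (by continuity)).inter
      (isOpen_lt continuous_const (by continuity))
  have hsub : Set.Icc (0:ℝ) 1 ⊆ U := fun u hu => ⟨Bpos h12 h22 hu, Apos h11 h21 hu⟩
  have hcd : ContDiffOn ℝ 1 (twoTypeH a11 a12 a21 a22) U := by
    have h1 : ContDiffOn ℝ 1 (fun u : ℝ => a12 / (a12 * u + a22 * (1 - u))) U :=
      ContDiffOn.div contDiffOn_const (by fun_prop) (fun u hu => hu.1.ne')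
    have h2 : ContDiffOn ℝ 1 (fun u : ℝ => a21 / (a11 * u + a21 * (1 - u))) U :=
      ContDiffOn.div contDiffOn_const (by fun_prop) (fun u hu => hu.2.ne')
    exact ((h1.sub h2).mul contDiffOn_id).mul (contDiffOn_const.sub contDiffOn_id)
  have hdc : ContinuousOn (deriv (twoTypeH a11 a12 a21 a22)) U :=
    hcd.continuousOn_deriv_of_isOpen hUopen le_rfl
  obtain ⟨M, hM⟩ := isCompact_Icc.exists_bound_of_continuousOn (hdc.mono hsub)
  refine ⟨⟨max M 0, le_max_right _ _⟩, ?_⟩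
  apply Convex.lipschitzOnWith_of_nnnorm_deriv_le
  · intro x hx
    exact (hcd.contDiffAt (hUopen.mem_nhds (hsub hx))).differentiableAt one_ne_zero
  · intro x hx
    have h1 : ‖deriv (twoTypeH a11 a12 a21 a22) x‖ ≤ max M 0 := (hM x hx).trans (le_max_left _ _)
    apply NNReal.coe_le_coe.1
    exact h1
  · exact convex_Icc 0 1

end Aux2

section Inv
variable {a11 a12 a21 a22 : ℝ}

open Set Filter

lemma hit_boundary {y : ℝ → ℝ} (hc : ∀ t, 0 ≤ t → ContinuousAt y t)
    (h0 : y 0 ∈ Set.Ioo (0:ℝ) 1) {t1 : ℝ} (ht1 : 0 ≤ t1) (hmem : y t1 ∉ Set.Ioo (0:ℝ) 1) :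
    ∃ t2, 0 ≤ t2 ∧ t2 ≤ t1 ∧ (y t2 = 0 ∨ y t2 = 1) := by
  have hcont : ContinuousOn y (Set.Icc 0 t1) := fun t ht => (hc t ht.1).continuousWithinAt
  rw [Set.mem_Ioo, not_and_or, not_lt, not_lt] at hmem
  rcases hmem with hle | hge
  · have h01 : (0:ℝ) ∈ Set.Icc (y t1) (y 0) := ⟨hle, h0.1.le⟩
    obtain ⟨t2, ht2, hy2⟩ := intermediate_value_Icc' ht1 hcont h01
    exact ⟨t2, ht2.1, ht2.2, Or.inl hy2⟩
  · have h01 : (1:ℝ) ∈ Set.Icc (y 0) (y t1) := ⟨h0.2.le, hge⟩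
    obtain ⟨t2, ht2, hy2⟩ := intermediate_value_Icc ht1 hcont h01
    exact ⟨t2, ht2.1, ht2.2, Or.inr hy2⟩

lemma sol_mem (h11 : 0 < a11) (h12 : 0 < a12) (h21 : 0 < a21) (h22 : 0 < a22)
    {y : ℝ → ℝ}
    (hy : ∀ t, 0 ≤ t → HasDerivAt y (twoTypeH a11 a12 a21 a22 (y t)) t)
    (h0 : y 0 ∈ Set.Ioo (0:ℝ) 1) : ∀ t, 0 ≤ t → y t ∈ Set.Ioo (0:ℝ) 1 := by
  have hc : ∀ t, 0 ≤ t → ContinuousAt y t := fun t ht => (hy t ht).continuousAt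
  by_contra hcon
  push_neg at hcon
  obtain ⟨t1, ht1, hmem⟩ := hcon
  obtain ⟨t2, ht2a, _, ht2c⟩ := hit_boundary hc h0 ht1 hmem
  set S : Set ℝ := {t | 0 ≤ t ∧ (y t = 0 ∨ y t = 1)} with hS
  have hne : S.Nonempty := ⟨t2, ht2a, ht2c⟩
  have hbdd : BddBelow S := ⟨0, fun t ht => ht.1⟩
  set T := sInf S with hT
  have hT0 : 0 ≤ T := le_csInf hne fun t ht => ht.1
  have hTS : y T = 0 ∨ y T = 1 := by
    obtain ⟨u, _, hu_tendsto, hu_mem⟩ := exists_seq_tendsto_sInf hne hbdd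
    have hyu : Tendsto (y ∘ u) atTop (nhds (y T)) := (hc T hT0).tendsto.comp hu_tendsto
    have hclosed : IsClosed ({0, 1} : Set ℝ) := (Set.toFinite ({0,1} : Set ℝ)).isClosed
    have := hclosed.mem_of_tendsto hyu (Filter.Eventually.of_forall fun n => (hu_mem n).2)
    simpa using this
  have hbefore : ∀ t ∈ Set.Icc 0 T, y t ∈ Set.Icc (0:ℝ) 1 := by
    intro t ht
    rcases eq_or_lt_of_le ht.2 with h | h
    · rw [h]; rcases hTS with h' | h' <;> simp [h']
    · by_contra hmem'
      have hmem'' : y t ∉ Set.Ioo (0:ℝ) 1 := fun hh => hmem' ⟨hh.1.le, hh.2.le⟩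
      obtain ⟨t3, ht3a, ht3b, ht3c⟩ := hit_boundary hc h0 ht.1 hmem''
      exact absurd (csInf_le hbdd ⟨ht3a, ht3c⟩) (by push_neg; exact lt_of_le_of_lt ht3b h)
  obtain ⟨K, hK⟩ := lipschitz_h h11 h12 h21 h22 (a21 := a21) (a12 := a12)
  have heq := ODE_solution_unique_of_mem_Icc_left
    (v := fun _ u => twoTypeH a11 a12 a21 a22 u) (s := fun _ => Set.Icc (0:ℝ) 1)
    (K := K) (fun _ _ => hK)
    (f := y) (g := fun _ => y T) (a := 0) (b := T)
    (fun t ht => (hc t ht.1).continuousWithinAt)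
    (fun t ht => (hy t ht.1.le).hasDerivWithinAt)
    (fun t ht => hbefore t ⟨ht.1.le, ht.2⟩)
    continuousOn_const
    (by
      intro t ht
      have : twoTypeH a11 a12 a21 a22 (y T) = 0 := by
        rcases hTS with h' | h' <;> rw [h'] <;> [exact h_zero; exact h_one]
      show HasDerivWithinAt (fun _ => y T) (twoTypeH a11 a12 a21 a22 (y T)) (Set.Iic t) t
      rw [this]
      exact hasDerivWithinAt_const _ _ _)
    (fun t ht => by
      rcases hTS with h' | h' <;> rw [h'] <;> norm_num)
    rfl
  have h00 : y 0 = y T := heq ⟨le_refl 0, hT0⟩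
  rcases hTS with h' | h' <;> rw [h00, h'] at h0
  · exact absurd h0.1 (lt_irrefl 0)
  · exact absurd h0.2 (lt_irrefl 1)

end Inv

section Trap
variable {a11 a12 a21 a22 : ℝ}

open Set Filter

lemma sol_ne_ustar (h11 : 0 < a11) (h12 : 0 < a12) (h21 : 0 < a21) (h22 : 0 < a22)
    (hcoop1 : a11 < a21) (hcoop2 : a22 < a12) {y : ℝ → ℝ}
    (hy : ∀ t, 0 ≤ t → HasDerivAt y (twoTypeH a11 a12 a21 a22 (y t)) t)
    (h0 : y 0 ∈ Set.Ioo (0:ℝ) 1) (hne0 : y 0 ≠ ustar a11 a12 a21 a22) :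
    ∀ t, 0 ≤ t → y t ≠ ustar a11 a12 a21 a22 := by
  have hc : ∀ t, 0 ≤ t → ContinuousAt y t := fun t ht => (hy t ht).continuousAt
  have hus := ustar_mem h12 h21 hcoop1 hcoop2
  by_contra hcon
  push_neg at hcon
  obtain ⟨t1, ht1, heq1⟩ := hcon
  set S : Set ℝ := {t | 0 ≤ t ∧ y t = ustar a11 a12 a21 a22} with hS
  have hne : S.Nonempty := ⟨t1, ht1, heq1⟩
  have hbdd : BddBelow S := ⟨0, fun t ht => ht.1⟩
  set T := sInf S with hT
  have hT0 : 0 ≤ T := le_csInf hne fun t ht => ht.1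
  have hTS : y T = ustar a11 a12 a21 a22 := by
    obtain ⟨u, _, hu_tendsto, hu_mem⟩ := exists_seq_tendsto_sInf hne hbdd
    have hyu : Tendsto (y ∘ u) atTop (nhds (y T)) := (hc T hT0).tendsto.comp hu_tendsto
    have hclosed : IsClosed ({ustar a11 a12 a21 a22} : Set ℝ) := isClosed_singleton
    have := hclosed.mem_of_tendsto hyu (Filter.Eventually.of_forall fun n => (hu_mem n).2)
    simpa using this
  have hmem01 := sol_mem h11 h12 h21 h22 hy h0
  obtain ⟨K, hK⟩ := lipschitz_h h11 h12 h21 h22 (a21 := a21) (a12 := a12)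
  have heq := ODE_solution_unique_of_mem_Icc_left
    (v := fun _ u => twoTypeH a11 a12 a21 a22 u) (s := fun _ => Set.Icc (0:ℝ) 1)
    (K := K) (fun _ _ => hK)
    (f := y) (g := fun _ => ustar a11 a12 a21 a22) (a := 0) (b := T)
    (fun t ht => (hc t ht.1).continuousWithinAt)
    (fun t ht => (hy t ht.1.le).hasDerivWithinAt)
    (fun t ht => by
      have := hmem01 t ht.1.le
      exact ⟨this.1.le, this.2.le⟩)
    continuousOn_const
    (by
      intro t ht
      show HasDerivWithinAt (fun _ => ustar a11 a12 a21 a22)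
        (twoTypeH a11 a12 a21 a22 (ustar a11 a12 a21 a22)) (Set.Iic t) t
      rw [h_ustar h11 h12 h21 h22 hcoop1 hcoop2]
      exact hasDerivWithinAt_const _ _ _)
    (fun t ht => ⟨hus.1.le, hus.2.le⟩)
    hTS
  exact hne0 (heq ⟨le_refl 0, hT0⟩)

lemma sol_trap_lower (h11 : 0 < a11) (h12 : 0 < a12) (h21 : 0 < a21) (h22 : 0 < a22)
    (hcoop1 : a11 < a21) (hcoop2 : a22 < a12) {y : ℝ → ℝ}
    (hy : ∀ t, 0 ≤ t → HasDerivAt y (twoTypeH a11 a12 a21 a22 (y t)) t)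
    (h0 : y 0 ∈ Set.Ioo (0:ℝ) (ustar a11 a12 a21 a22)) :
    ∀ t, 0 ≤ t → y t ∈ Set.Ioo (0:ℝ) (ustar a11 a12 a21 a22) := by
  have hus := ustar_mem h12 h21 hcoop1 hcoop2
  have h0' : y 0 ∈ Set.Ioo (0:ℝ) 1 := ⟨h0.1, h0.2.trans hus.2⟩
  have hc : ∀ t, 0 ≤ t → ContinuousAt y t := fun t ht => (hy t ht).continuousAt
  have hmem01 := sol_mem h11 h12 h21 h22 hy h0'
  have hneu := sol_ne_ustar h11 h12 h21 h22 hcoop1 hcoop2 hy h0' (ne_of_lt h0.2)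
  intro t ht
  refine ⟨(hmem01 t ht).1, ?_⟩
  rcases lt_or_ge (y t) (ustar a11 a12 a21 a22) with h | h
  · exact h
  · exfalso
    have h' : ustar a11 a12 a21 a22 ∈ Set.Icc (y 0) (y t) := ⟨h0.2.le, h⟩
    have hcont : ContinuousOn y (Set.Icc 0 t) := fun s hs => (hc s hs.1).continuousWithinAt
    obtain ⟨t2, ht2, hy2⟩ := intermediate_value_Icc ht hcont h'
    exact hneu t2 ht2.1 hy2

end Trap

section Conv
variable {a11 a12 a21 a22 : ℝ}

open Set Filter

lemma tendsto_of_below (h11 : 0 < a11) (h12 : 0 < a12) (h21 : 0 < a21) (h22 : 0 < a22)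
    (hcoop1 : a11 < a21) (hcoop2 : a22 < a12) {y : ℝ → ℝ}
    (hy : ∀ t, 0 ≤ t → HasDerivAt y (twoTypeH a11 a12 a21 a22 (y t)) t)
    (h0 : y 0 ∈ Set.Ioo (0:ℝ) (ustar a11 a12 a21 a22)) :
    Tendsto y atTop (nhds (ustar a11 a12 a21 a22)) := by
  have hus := ustar_mem h12 h21 hcoop1 hcoop2
  have hc : ∀ t, 0 ≤ t → ContinuousAt y t := fun t ht => (hy t ht).continuousAt
  have htrap := sol_trap_lower h11 h12 h21 h22 hcoop1 hcoop2 hy h0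
  -- y is monotone on [0, ∞)
  have hmono : MonotoneOn y (Set.Ici 0) := by
    apply monotoneOn_of_deriv_nonneg (convex_Ici 0)
      (fun t ht => (hc t ht).continuousWithinAt)
    · intro t ht
      rw [interior_Ici] at ht
      exact ((hy t (le_of_lt ht)).differentiableAt).differentiableWithinAt
    · intro t ht
      rw [interior_Ici] at ht
      rw [(hy t (le_of_lt ht)).deriv]
      exact le_of_lt (h_sign_pos h11 h12 h21 h22 hcoop1 hcoop2 (htrap t (le_of_lt ht)))
  set w : ℝ → ℝ := fun t => y (max t 0) with hw
  have hwmono : Monotone w := fun s t hst =>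
    hmono (le_max_right s 0) (le_max_right t 0) (max_le_max hst le_rfl)
  have hbdd : BddAbove (Set.range w) := by
    refine ⟨ustar a11 a12 a21 a22, ?_⟩
    rintro x ⟨t, rfl⟩
    exact (htrap _ (le_max_right _ _)).2.le
  set L := ⨆ t, w t with hL
  have hwL : Tendsto w atTop (nhds L) := tendsto_atTop_ciSup hwmono hbdd
  have hyw : y =ᶠ[atTop] w := by
    filter_upwards [eventually_ge_atTop (0:ℝ)] with t ht
    simp [hw, max_eq_left ht]
  have hyL : Tendsto y atTop (nhds L) := hwL.congr' hyw.symm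
  have hyleL : ∀ t, w t ≤ L := fun t => le_ciSup hbdd t
  have hw0 : w 0 = y 0 := by simp [hw]
  have hLpos : 0 < L := lt_of_lt_of_le h0.1 (hw0 ▸ hyleL 0)
  have hLle : L ≤ ustar a11 a12 a21 a22 :=
    ciSup_le fun t => (htrap _ (le_max_right _ _)).2.le
  rcases eq_or_lt_of_le hLle with heq | hlt
  · rwa [heq] at hyL
  exfalso
  have hLmem : L ∈ Set.Ioo (0:ℝ) (ustar a11 a12 a21 a22) := ⟨hLpos, hlt⟩
  set c := twoTypeH a11 a12 a21 a22 L / 2 with hc'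
  have hHL : 0 < twoTypeH a11 a12 a21 a22 L := h_sign_pos h11 h12 h21 h22 hcoop1 hcoop2 hLmem
  have hcpos : 0 < c := by positivity
  have hcontH : ContinuousAt (twoTypeH a11 a12 a21 a22) L := by
    have hL1 : L ∈ Set.Icc (0:ℝ) 1 := ⟨hLmem.1.le, (hLmem.2.trans hus.2).le⟩
    have hBne := (Bpos h12 h22 hL1).ne'
    have hAne := (Apos h11 h21 hL1).ne'
    have hBcont : Continuous fun u : ℝ => a12 * u + a22 * (1 - u) := by fun_prop
    have hAcont : Continuous fun u : ℝ => a11 * u + a21 * (1 - u) := by fun_prop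
    unfold twoTypeH
    exact (((continuousAt_const.div hBcont.continuousAt hBne).sub
      (continuousAt_const.div hAcont.continuousAt hAne)).mul continuousAt_id).mul
      (continuousAt_const.sub continuousAt_id)
  have hev : ∀ᶠ u in nhds L, c < twoTypeH a11 a12 a21 a22 u :=
    hcontH.eventually_const_lt (by linarith)
  obtain ⟨δ, hδpos, hδ⟩ := Metric.eventually_nhds_iff.1 hev
  obtain ⟨T0, hT0⟩ := (hyL.eventually_const_lt (show L - δ < L by linarith)).exists_forall_of_atTop
  set T := max T0 0 with hT
  have hTge0 : (0:ℝ) ≤ T := le_max_right _ _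
  have key : ∀ t, T ≤ t → c < twoTypeH a11 a12 a21 a22 (y t) := by
    intro t ht
    have ht0 : (0:ℝ) ≤ t := hTge0.trans ht
    have h1 : L - δ < y t := hT0 t ((le_max_left _ _).trans ht)
    have h2 : y t ≤ L := by simpa [hw, max_eq_left ht0] using hyleL t
    exact hδ (by rw [Real.dist_eq, abs_lt]; constructor <;> linarith)
  have gmono : MonotoneOn (fun t => y t - t * c) (Set.Ici T) := by
    apply monotoneOn_of_deriv_nonneg (convex_Ici T)
    · exact fun t ht => ((hc t (hTge0.trans ht)).sub (by fun_prop)).continuousWithinAt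
    · intro t ht
      rw [interior_Ici] at ht
      exact ((hy t (hTge0.trans (le_of_lt ht))).sub
        (hasDerivAt_mul_const c)).differentiableAt.differentiableWithinAt
    · intro t ht
      rw [interior_Ici] at ht
      rw [HasDerivAt.deriv (f := fun t => y t - t * c) ((hy t (hTge0.trans (le_of_lt ht))).sub (hasDerivAt_mul_const c))]
      have := key t (le_of_lt ht)
      linarith
  have hyT : y T < ustar a11 a12 a21 a22 := (htrap T hTge0).2
  set q := (ustar a11 a12 a21 a22 - y T) / c with hq'
  have hqpos : 0 < q := div_pos (by linarith) hcpos
  set t1 := T + q + 1 with ht1'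
  have ht1T : T ≤ t1 := by linarith
  have hmle : y T - T * c ≤ y t1 - t1 * c :=
    gmono Set.self_mem_Ici ht1T ht1T
  have hq : q * c = ustar a11 a12 a21 a22 - y T := div_mul_cancel₀ _ (ne_of_gt hcpos)
  have hexp : t1 * c = T * c + q * c + 1 * c := by rw [ht1']; ring
  have hlast : y t1 < ustar a11 a12 a21 a22 := (htrap t1 (hTge0.trans ht1T)).2
  linarith

end Conv

section Main
variable {a11 a12 a21 a22 : ℝ}

open Set Filter

lemma twoTypeH_swap (u : ℝ) :
    twoTypeH a22 a21 a12 a11 (1 - u) = - twoTypeH a11 a12 a21 a22 u := by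
  simp only [twoTypeH]
  ring

lemma ustar_swap (h12 : 0 < a12) (h21 : 0 < a21) (hcoop1 : a11 < a21) (hcoop2 : a22 < a12) :
    ustar a22 a21 a12 a11 = 1 - ustar a11 a12 a21 a22 := by
  have hD := (hDpos h12 h21 hcoop1 hcoop2).ne'
  have hD2 : a21 * (a12 - a22) + a12 * (a21 - a11) = a12 * (a21 - a11) + a21 * (a12 - a22) := by
    ring
  rw [ustar, ustar, hD2, eq_sub_iff_add_eq, ← add_div, div_eq_one_iff_eq hD]

lemma sol_eq_ustar (h11 : 0 < a11) (h12 : 0 < a12) (h21 : 0 < a21) (h22 : 0 < a22)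
    (hcoop1 : a11 < a21) (hcoop2 : a22 < a12) {y : ℝ → ℝ}
    (hy : ∀ t, 0 ≤ t → HasDerivAt y (twoTypeH a11 a12 a21 a22 (y t)) t)
    (h0 : y 0 = ustar a11 a12 a21 a22) : ∀ t, 0 ≤ t → y t = ustar a11 a12 a21 a22 := by
  have hus := ustar_mem h12 h21 hcoop1 hcoop2
  have h0' : y 0 ∈ Set.Ioo (0:ℝ) 1 := h0 ▸ hus
  have hc : ∀ t, 0 ≤ t → ContinuousAt y t := fun t ht => (hy t ht).continuousAt
  have hmem01 := sol_mem h11 h12 h21 h22 hy h0'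
  obtain ⟨K, hK⟩ := lipschitz_h h11 h12 h21 h22 (a21 := a21) (a12 := a12)
  intro t ht
  have heq := ODE_solution_unique_of_mem_Icc_right
    (v := fun _ u => twoTypeH a11 a12 a21 a22 u) (s := fun _ => Set.Icc (0:ℝ) 1)
    (K := K) (fun _ _ => hK)
    (f := y) (g := fun _ => ustar a11 a12 a21 a22) (a := 0) (b := t)
    (fun s hs => (hc s hs.1).continuousWithinAt)
    (fun s hs => (hy s hs.1).hasDerivWithinAt)
    (fun s hs => by
      have := hmem01 s hs.1
      exact ⟨this.1.le, this.2.le⟩)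
    continuousOn_const
    (by
      intro s hs
      show HasDerivWithinAt (fun _ => ustar a11 a12 a21 a22)
        (twoTypeH a11 a12 a21 a22 (ustar a11 a12 a21 a22)) (Set.Ici s) s
      rw [h_ustar h11 h12 h21 h22 hcoop1 hcoop2]
      exact hasDerivWithinAt_const _ _ _)
    (fun s hs => ⟨hus.1.le, hus.2.le⟩)
    h0
  exact heq ⟨ht, le_refl t⟩

end Main

open Filter Set in
theorem cooperation_coexistence
    (a11 a12 a21 a22 : ℝ)
    (h11 : 0 < a11) (h12 : 0 < a12) (h21 : 0 < a21) (h22 : 0 < a22)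
    (hcoop1 : a11 < a21) (hcoop2 : a22 < a12) :
    (∀ u ∈ Set.Ioo (0 : ℝ)
        (a21 * (a12 - a22) / (a12 * (a21 - a11) + a21 * (a12 - a22))),
      0 < twoTypeH a11 a12 a21 a22 u) ∧
    (∀ u ∈ Set.Ioo (a21 * (a12 - a22) / (a12 * (a21 - a11) + a21 * (a12 - a22))) (1 : ℝ),
      twoTypeH a11 a12 a21 a22 u < 0) ∧
    (∀ y : ℝ → ℝ,
      (∀ t, 0 ≤ t → HasDerivAt y (twoTypeH a11 a12 a21 a22 (y t)) t) →
      y 0 ∈ Set.Ioo (0 : ℝ) 1 →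
      Filter.Tendsto y Filter.atTop
        (nhds (a21 * (a12 - a22) / (a12 * (a21 - a11) + a21 * (a12 - a22))))) := by
  have hue : a21 * (a12 - a22) / (a12 * (a21 - a11) + a21 * (a12 - a22)) =
      ustar a11 a12 a21 a22 := rfl
  rw [hue]
  have hus := ustar_mem h12 h21 hcoop1 hcoop2
  refine ⟨fun u hu => h_sign_pos h11 h12 h21 h22 hcoop1 hcoop2 hu,
    fun u hu => h_sign_neg h11 h12 h21 h22 hcoop1 hcoop2 hu, ?_⟩
  intro y hy hy0
  rcases lt_trichotomy (y 0) (ustar a11 a12 a21 a22) with hlt | heq | hgt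
  · exact tendsto_of_below h11 h12 h21 h22 hcoop1 hcoop2 hy ⟨hy0.1, hlt⟩
  · have hconst := sol_eq_ustar h11 h12 h21 h22 hcoop1 hcoop2 hy heq
    apply Filter.Tendsto.congr' _ (tendsto_const_nhds (α := ℝ) (x := ustar a11 a12 a21 a22))
    filter_upwards [Filter.eventually_ge_atTop (0:ℝ)] with t ht
    exact (hconst t ht).symm
  · set z : ℝ → ℝ := fun t => 1 - y t with hz
    have hzderiv : ∀ t, 0 ≤ t → HasDerivAt z (twoTypeH a22 a21 a12 a11 (z t)) t := by
      intro t ht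
      have h1 : HasDerivAt z (0 - twoTypeH a11 a12 a21 a22 (y t)) t :=
        (hasDerivAt_const t 1).sub (hy t ht)
      rw [zero_sub, ← twoTypeH_swap] at h1
      exact h1
    have hz0 : z 0 ∈ Set.Ioo (0:ℝ) (ustar a22 a21 a12 a11) := by
      rw [ustar_swap h12 h21 hcoop1 hcoop2]
      exact ⟨by simp [hz]; linarith [hy0.2], by simp [hz]; linarith⟩
    have htz := tendsto_of_below h22 h21 h12 h11 hcoop2 hcoop1 hzderiv hz0
    have h2 : Tendsto (fun t => 1 - z t) atTop (nhds (1 - ustar a22 a21 a12 a11)) :=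
      tendsto_const_nhds.sub htz
    rw [ustar_swap h12 h21 hcoop1 hcoop2] at h2
    simp only [hz, sub_sub_cancel] at h2
    convert h2 using 2
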